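/- Let m ≥ 1 and S ≥ 1 be integers and let (p_I)_{I ⊆ {0,…,m}} be nonnegative reals indexed by the subsets of {0,…,m} with ∑_{I ⊆ {0,…,m}} p_I = 1. Then ∏_{i=0}^{m} ( ∑_{I ⊆ {0,…,m}, i ∈ I} p_I )^S ≤ p_{{0,…,m}} + (m/(m+1))^{(m+1)S}, where p_{{0,…,m}} is the weight of the full set. -/

import Mathlib

open Finset

/-- AM-GM for natural powers. -/
lemma amgm_pow {n : ℕ} (hn : 0 < n) (q : Fin n → ℝ) (hq : ∀ i, 0 ≤ q i) :
    ∏ i, q i ≤ ((∑ i, q i) / n) ^ n := by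
  have hn' : (n : ℝ) ≠ 0 := Nat.cast_ne_zero.mpr hn.ne'
  have h := Real.geom_mean_le_arith_mean_weighted univ (fun _ => (n : ℝ)⁻¹) q
    (fun i _ => by positivity)
    (by simp [mul_inv_cancel₀ hn'])
    (fun i _ => hq i)
  have hL : 0 ≤ ∏ i, q i ^ ((n : ℝ)⁻¹) := by
    apply Finset.prod_nonneg; intro i _; exact Real.rpow_nonneg (hq i) _
  have h2 := pow_le_pow_left₀ hL h n
  calc ∏ i, q i = (∏ i, q i ^ ((n : ℝ)⁻¹)) ^ n := by
        rw [← Finset.prod_pow]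
        refine Finset.prod_congr rfl fun i _ => ?_
        rw [← Real.rpow_natCast (q i ^ ((n:ℝ)⁻¹)) n, ← Real.rpow_mul (hq i),
          inv_mul_cancel₀ hn', Real.rpow_one]
    _ ≤ (∑ i, (n : ℝ)⁻¹ * q i) ^ n := h2
    _ = ((∑ i, q i) / n) ^ n := by rw [← Finset.mul_sum]; ring_nf

/-- Inequality (4.12): for nonnegative weights `p_I` indexed by subsets of `{0,…,m}`
summing to 1, `∏ i (∑_{I ∋ i} p_I)^S ≤ p_{{0,…,m}} + (m/(m+1))^((m+1)S)`. -/
theorem ineq_4_12 (m S : ℕ) (hm : 1 ≤ m) (hS : 1 ≤ S)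
    (p : Finset (Fin (m + 1)) → ℝ) (hp : ∀ I, 0 ≤ p I)
    (hsum : ∑ I : Finset (Fin (m + 1)), p I = 1) :
    ∏ i : Fin (m + 1), (∑ I ∈ univ.filter (fun I : Finset (Fin (m + 1)) => i ∈ I), p I) ^ S
      ≤ p univ + ((m : ℝ) / (m + 1)) ^ ((m + 1) * S) := by
  set q : Fin (m + 1) → ℝ :=
    fun i => ∑ I ∈ univ.filter (fun I : Finset (Fin (m + 1)) => i ∈ I), p I with hq_def
  have hq0 : ∀ i, 0 ≤ q i := fun i => Finset.sum_nonneg fun I _ => hp I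
  set t := p univ with ht_def
  have ht0 : 0 ≤ t := hp univ
  have ht1 : t ≤ 1 := by
    rw [← hsum]
    exact Finset.single_le_sum (fun I _ => hp I) (Finset.mem_univ _)
  -- double counting: ∑ q i = ∑_I card I * p I ≤ m + t
  have hsum_q : ∑ i, q i ≤ m + t := by
    have hswap : ∑ i, q i = ∑ I : Finset (Fin (m + 1)), (I.card : ℝ) * p I := by
      simp only [hq_def, Finset.sum_filter]
      rw [Finset.sum_comm]
      refine Finset.sum_congr rfl fun I _ => ?_
      rw [← Finset.sum_filter]
      have : (univ.filter (fun i : Fin (m+1) => i ∈ I)) = I := by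
        ext i; simp
      rw [this, Finset.sum_const, nsmul_eq_mul]
    rw [hswap]
    have hbound : ∀ I : Finset (Fin (m + 1)),
        (I.card : ℝ) * p I ≤ m * p I + (if I = univ then p I else 0) := by
      intro I
      by_cases hI : I = univ
      · subst hI
        simp only [if_pos rfl, Finset.card_univ, Fintype.card_fin]
        push_cast; ring_nf; rfl
      · simp only [if_neg hI, add_zero]
        have hc : I.card ≤ m := by
          have := Finset.card_lt_card ((Finset.ssubset_univ_iff).mpr hI)
          simpa [Finset.card_univ] using Nat.lt_succ_iff.mp (by simpa using this)
        exact mul_le_mul_of_nonneg_right (by exact_mod_cast hc) (hp I)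
    calc ∑ I : Finset (Fin (m + 1)), (I.card : ℝ) * p I
        ≤ ∑ I : Finset (Fin (m + 1)), ((m : ℝ) * p I + if I = univ then p I else 0) :=
          Finset.sum_le_sum fun I _ => hbound I
      _ = m + t := by
          rw [Finset.sum_add_distrib, ← Finset.mul_sum, hsum, Finset.sum_ite_eq' _ univ]
          simp [ht_def]
  -- AM-GM
  have hprod : ∏ i, q i ≤ ((m + t) / (m + 1)) ^ (m + 1) := by
    calc ∏ i, q i ≤ ((∑ i, q i) / (m + 1)) ^ (m + 1) := by
          have := amgm_pow (n := m + 1) (Nat.succ_pos m) q hq0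
          simpa using this
      _ ≤ ((m + t) / (m + 1)) ^ (m + 1) := by
          gcongr
          · exact div_nonneg (Finset.sum_nonneg fun i _ => hq0 i) (by positivity)
          all_goals exact hsum_q
  -- put things together
  have hbase0 : (0:ℝ) ≤ (m + t) / (m + 1) := by positivity
  have hmain : ∏ i, q i ^ S ≤ ((m + t) / (m + 1)) ^ ((m + 1) * S) := by
    calc ∏ i, q i ^ S = (∏ i, q i) ^ S := Finset.prod_pow _ _ _
      _ ≤ (((m + t) / (m + 1)) ^ (m + 1)) ^ S :=
          pow_le_pow_left₀ (Finset.prod_nonneg fun i _ => hq0 i) hprod S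
      _ = ((m + t) / (m + 1)) ^ ((m + 1) * S) := by rw [← pow_mul]
  refine hmain.trans ?_
  -- convexity step: ((m+t)/(m+1))^N ≤ t + (m/(m+1))^N
  set N := (m + 1) * S
  set a : ℝ := (m : ℝ) / (m + 1) with ha_def
  have ha0 : (0:ℝ) ≤ a := by positivity
  have hsplit : (m + t) / (m + 1) = (1 - t) * a + t * 1 := by
    rw [ha_def]; field_simp [ha_def]
    ring
  have hconv := (convexOn_pow N).2 (Set.mem_Ici.mpr ha0) (Set.mem_Ici.mpr zero_le_one)
    (by linarith : (0:ℝ) ≤ 1 - t) ht0 (by ring)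
  simp only [smul_eq_mul, one_pow] at hconv
  rw [hsplit]
  calc ((1 - t) * a + t * 1) ^ N ≤ (1 - t) * a ^ N + t * 1 := hconv
    _ ≤ t + a ^ N := by
        have : (1 - t) * a ^ N ≤ a ^ N := by
          nlinarith [pow_nonneg ha0 N]
        linarith
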